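/- For every integer k ≥ 2 and every γ with 1 ≤ γ < 2 − 1/k, there exists a finite ground set X with |X| = k + 1 and a monotone submodular function f : 2^X → ℝ≥0 such that, under the uniform matroid constraint I = { S ⊆ X : |S| ≤ k }, the instance (X, I, f) is γ-stable with unique optimal solution S*, and yet every greedy run (repeatedly adding an element of maximum marginal value of f while the set has size at most k, until the set has size k) outputs a set different from S*. -/

import Mathlib

open Finset

/-- A downward-closed independence system on the finite type `α`. -/
def DownClosed {α : Type*} (I : Finset α → Prop) : Prop :=
  I ∅ ∧ ∀ A B : Finset α, I A → B ⊆ A → I B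
/-- Monotonicity of a set function. -/
def MonotoneFn {α : Type*} (f : Finset α → ℝ) : Prop :=
  ∀ A B : Finset α, A ⊆ B → f A ≤ f B

/-- Submodularity of a set function. -/
def SubmodularFn {α : Type*} [DecidableEq α] (f : Finset α → ℝ) : Prop :=
  ∀ A B : Finset α, f (A ∪ B) + f (A ∩ B) ≤ f A + f B

/-- `f'` is a `γ`-perturbation of the monotone submodular function `f`. -/
def IsPerturbation {α : Type*} [DecidableEq α] (γ : ℝ) (f f' : Finset α → ℝ) : Prop :=
  (∀ S : Finset α, 0 ≤ f' S) ∧ MonotoneFn f' ∧ SubmodularFn f' ∧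
  (∀ S : Finset α, f S ≤ f' S ∧ f' S ≤ γ * f S) ∧
  ∀ S : Finset α, ∀ j ∉ S,
    f (insert j S) - f S ≤ f' (insert j S) - f' S ∧
    (f' (insert j S) - f' S) - (f (insert j S) - f S) ≤ (γ - 1) * f {j}
/-- The submodular instance `(I, f)` is `γ`-stable with (unique) optimal solution `S`:
for every `γ`-perturbation `f'` of `f`, `S` is the unique maximizer of `f'` over `I`. -/
def SubmodStable {α : Type*} [DecidableEq α] (I : Finset α → Prop)
    (f : Finset α → ℝ) (γ : ℝ) (S : Finset α) : Prop :=
  I S ∧ ∀ f' : Finset α → ℝ, IsPerturbation γ f f' →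
    ∀ T : Finset α, I T → T ≠ S → f' T < f' S
/-- A greedy run for a set function `f`: every prefix is independent, each `eᵢ`
maximizes the marginal value among feasible additions, and the final set is maximal. -/
def GreedyRunSub {α : Type*} [DecidableEq α] (I : Finset α → Prop)
    (f : Finset α → ℝ) (l : List α) : Prop :=
  (∀ i : Fin l.length,
    l.get i ∉ (l.take i.val).toFinset ∧
    I (insert (l.get i) (l.take i.val).toFinset) ∧
    ∀ e : α, e ∉ (l.take i.val).toFinset → I (insert e (l.take i.val).toFinset) →
      f (insert e (l.take i.val).toFinset) - f (l.take i.val).toFinset ≤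
        f (insert (l.get i) (l.take i.val).toFinset) - f (l.take i.val).toFinset) ∧
  ∀ e : α, e ∉ l.toFinset → ¬ I (insert e l.toFinset)

/-- For every `k ≥ 2` and every `γ` with `1 ≤ γ < 2 − 1/k`, there is a
monotone submodular function on a ground set of `k+1` elements such that, under the
uniform matroid of rank `k`, the instance is `γ`-stable and yet every greedy run outputs
a set different from the optimal solution `S*`. -/
theorem greedy_fails_uniform_matroid_below_threshold
    (k : ℕ) (hk : 2 ≤ k) (γ : ℝ) (hγ1 : 1 ≤ γ) (hγ2 : γ < 2 - 1 / (k : ℝ)) :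
    ∃ (f : Finset (Fin (k + 1)) → ℝ) (Sstar : Finset (Fin (k + 1))),
      (∀ S, 0 ≤ f S) ∧ MonotoneFn f ∧ SubmodularFn f ∧
      SubmodStable (fun S : Finset (Fin (k + 1)) => S.card ≤ k) f γ Sstar ∧
      ∀ l : List (Fin (k + 1)),
        GreedyRunSub (fun S : Finset (Fin (k + 1)) => S.card ≤ k) f l →
        l.toFinset ≠ Sstar := by

  -- basic numeric facts
  have hk0 : (0:ℝ) < k := by positivity
  have hk1 : (1:ℝ) ≤ k := by exact_mod_cast Nat.one_le_of_lt hk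
  set c : ℝ := 1 + (γ - 1) * k with hc
  have hc1 : (1:ℝ) ≤ c := by nlinarith
  have hc0 : (0:ℝ) < c := by linarith
  have hck : c < k := by
    have h1 : γ - 1 < 1 - 1/(k:ℝ) := by linarith
    have h2 : (1 - 1/(k:ℝ)) * k = k - 1 := by field_simp
    nlinarith
  set ε : ℝ := (1/(k:ℝ) + 1/c)/2 with hεdef
  have hinv : 1/(k:ℝ) < 1/c := one_div_lt_one_div_of_lt hc0 hck
  have hεlo : 1/(k:ℝ) < ε := by rw [hεdef]; linarith
  have hεhi : ε < 1/c := by rw [hεdef]; linarith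
  have hε0 : 0 < ε := lt_trans (by positivity) hεlo
  have hεk : 1 < ε * k := by
    have := (div_lt_iff₀ hk0).mp hεlo
    linarith
  have hεc : ε * c < 1 := by
    have := (lt_div_iff₀ hc0).mp hεhi
    linarith
  have hε1 : ε < 1 := lt_of_lt_of_le hεhi (by
    rw [div_le_one hc0]; exact hc1)
  -- the ground set element 0 and the optimum Y = univ \ {0}
  set z : Fin (k+1) := 0 with hzdef
  set Y : Finset (Fin (k+1)) := Finset.univ.erase z with hYdef
  have hzY : z ∉ Y := notMem_erase _ _
  have hYcard : Y.card = k := by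
    rw [hYdef, card_erase_of_mem (mem_univ z), card_univ, Fintype.card_fin]
    omega
  -- the function
  set m : Finset (Fin (k+1)) → ℝ := fun S => ((S.erase z).card : ℝ) with hmdef
  set f : Finset (Fin (k+1)) → ℝ :=
    fun S => m S + (if z ∈ S then ε * ((k:ℝ) - m S) else 0) with hfdef
  have hm0 : ∀ S, 0 ≤ m S := fun S => by positivity
  have hmk : ∀ S, m S ≤ k := by
    intro S
    have hsub : S.erase z ⊆ Finset.univ.erase z := erase_subset_erase _ (subset_univ S)
    have h := card_le_card hsub
    rw [← hYdef, hYcard] at h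
    simp only [hmdef]
    exact_mod_cast h
  have hmmono : ∀ A B, A ⊆ B → m A ≤ m B := by
    intro A B hAB
    have h := card_le_card (erase_subset_erase z hAB)
    simp only [hmdef]
    exact_mod_cast h
  have hmmod : ∀ A B, m (A ∪ B) + m (A ∩ B) = m A + m B := by
    intro A B
    have hu : (A ∪ B).erase z = A.erase z ∪ B.erase z := erase_union_distrib A B z
    have hi : (A ∩ B).erase z = A.erase z ∩ B.erase z := by
      ext x; simp [mem_erase, mem_inter, and_assoc, and_comm, and_left_comm]
    have hcard := card_union_add_card_inter (A.erase z) (B.erase z)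
    simp only [hmdef, hu, hi]
    exact_mod_cast hcard
  -- nonnegativity
  have hfnonneg : ∀ S, 0 ≤ f S := by
    intro S
    have h1 := hm0 S
    have h2 := hmk S
    simp only [hfdef]
    split
    · have := mul_nonneg hε0.le (sub_nonneg.mpr h2)
      linarith
    · linarith
  -- monotonicity
  have hfmono : MonotoneFn f := by
    intro A B hAB
    have h1 := hmmono A B hAB
    have h2 := hmk B
    simp only [hfdef]
    by_cases hA : z ∈ A
    · have hB : z ∈ B := hAB hA
      rw [if_pos hA, if_pos hB]
      have := mul_nonneg (sub_nonneg.mpr hε1.le) (sub_nonneg.mpr h1)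
      nlinarith
    · rw [if_neg hA]
      by_cases hB : z ∈ B
      · rw [if_pos hB]
        have := mul_nonneg hε0.le (sub_nonneg.mpr h2)
        linarith
      · rw [if_neg hB]; linarith
  -- submodularity
  have hfsub : SubmodularFn f := by
    intro A B
    have hmod := hmmod A B
    have hA1 : m A ≤ m (A ∪ B) := hmmono _ _ subset_union_left
    have hB1 : m B ≤ m (A ∪ B) := hmmono _ _ subset_union_right
    simp only [hfdef]
    by_cases hA : z ∈ A <;> by_cases hB : z ∈ B
    · rw [if_pos (mem_union_left _ hA), if_pos (mem_inter_of_mem hA hB),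
        if_pos hA, if_pos hB]
      have h5 : m (A ∩ B) = m A + m B - m (A ∪ B) := by linarith
      rw [h5]
      apply le_of_eq
      ring
    · rw [if_pos (mem_union_left _ hA), if_neg (by simp [hA, hB] : z ∉ A ∩ B),
        if_pos hA, if_neg hB]
      have := mul_nonneg hε0.le (sub_nonneg.mpr hA1)
      nlinarith
    · rw [if_pos (mem_union_right _ hB), if_neg (by simp [hA, hB] : z ∉ A ∩ B),
        if_neg hA, if_pos hB]
      have := mul_nonneg hε0.le (sub_nonneg.mpr hB1)
      nlinarith
    · rw [if_neg (by simp [hA, hB] : z ∉ A ∪ B), if_neg (by simp [hA, hB] : z ∉ A ∩ B),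
        if_neg hA, if_neg hB]
      linarith
  -- value computations
  have hmz : ∀ S, z ∉ S → m S = (S.card : ℝ) := by
    intro S hS
    simp only [hmdef, erase_eq_of_notMem hS]
  have hfz : f {z} = ε * k := by
    simp only [hfdef, hmdef]
    rw [if_pos (mem_singleton_self z)]
    simp
  have hfsingle : ∀ e : Fin (k+1), e ≠ z → f {e} = 1 := by
    intro e he
    have hz : z ∉ ({e} : Finset (Fin (k+1))) := by simp [Ne.symm he]
    simp only [hfdef]
    rw [if_neg hz, hmz _ hz]
    simp
  have hfY : f Y = k := by
    simp only [hfdef]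
    rw [if_neg hzY, hmz _ hzY, hYcard]
    simp
  have hYecard : ∀ j ∈ Y, ((Y.erase j).card : ℝ) = (k:ℝ) - 1 := by
    intro j hj
    rw [card_erase_of_mem hj, hYcard]
    have : (1:ℕ) ≤ k := Nat.one_le_of_lt hk
    push_cast [Nat.cast_sub this]
    ring
  have hfYe : ∀ j ∈ Y, f (Y.erase j) = (k:ℝ) - 1 := by
    intro j hj
    have hz' : z ∉ Y.erase j := fun h => hzY (mem_of_mem_erase h)
    simp only [hfdef]
    rw [if_neg hz', hmz _ hz', hYecard j hj]
    simp
  have hfzYe : ∀ j ∈ Y, f (insert z (Y.erase j)) = ((k:ℝ) - 1) + ε := by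
    intro j hj
    have hz' : z ∉ Y.erase j := fun h => hzY (mem_of_mem_erase h)
    have herase : (insert z (Y.erase j)).erase z = Y.erase j := erase_insert hz'
    simp only [hfdef, hmdef]
    rw [if_pos (mem_insert_self z _), herase, hYecard j hj]
    ring
  refine ⟨f, Y, hfnonneg, hfmono, hfsub, ⟨by simpa using hYcard.le, ?_⟩, ?_⟩
  · -- stability
    intro f' hf' T hT hTY
    obtain ⟨hf'0, hf'mono, hf'sub, hf'sand, hf'marg⟩ := hf'
    -- key1: f' (Y.erase j) + 1 ≤ f' Y for j ∈ Y
    have key1 : ∀ j ∈ Y, f' (Y.erase j) + 1 ≤ f' Y := by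
      intro j hj
      have hnot : j ∉ Y.erase j := notMem_erase _ _
      have := (hf'marg (Y.erase j) j hnot).1
      rw [insert_erase hj] at this
      rw [hfY, hfYe j hj] at this
      linarith
    by_cases hzT : z ∈ T
    · -- T contains z
      have hT' : (T.erase z).card < Y.card := by
        rw [hYcard, card_erase_of_mem hzT]
        have hTpos : 0 < T.card := card_pos.mpr ⟨z, hzT⟩
        omega
      have hT'Y : T.erase z ⊆ Y := by
        intro x hx
        rw [hYdef, mem_erase]
        exact ⟨(mem_erase.mp hx).1, mem_univ x⟩
      obtain ⟨j, hjY, hjT⟩ : ∃ j ∈ Y, j ∉ T.erase z := by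
        by_contra h
        push_neg at h
        exact absurd (card_le_card h) (not_le.mpr hT')
      have hTsub : T ⊆ insert z (Y.erase j) := by
        intro x hx
        by_cases hxz : x = z
        · subst hxz; exact mem_insert_self z _
        · have : x ∈ T.erase z := mem_erase.mpr ⟨hxz, hx⟩
          exact mem_insert_of_mem (mem_erase.mpr ⟨fun h => hjT (h ▸ this), hT'Y this⟩)
      have hznot : z ∉ Y.erase j := fun h => hzY (mem_of_mem_erase h)
      have hmarg := (hf'marg (Y.erase j) z hznot).2
      rw [hfzYe j hjY, hfYe j hjY, hfz] at hmarg
      have h1 : f' T ≤ f' (insert z (Y.erase j)) := hf'mono _ _ hTsub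
      have h2 := key1 j hjY
      -- ε + (γ-1)*(ε*k) = ε*c < 1
      have h3 : ε + (γ - 1) * (ε * k) = ε * c := by rw [hc]; ring
      linarith
    · -- T ⊆ Y, proper
      have hTsubY : T ⊆ Y := by
        intro x hx
        rw [hYdef, mem_erase]
        exact ⟨fun h => hzT (h ▸ hx), mem_univ x⟩
      obtain ⟨j, hjY, hjT⟩ : ∃ j ∈ Y, j ∉ T := by
        by_contra h
        push_neg at h
        exact hTY (Finset.Subset.antisymm hTsubY h)
      have hsub : T ⊆ Y.erase j := fun x hx =>
        mem_erase.mpr ⟨fun h => hjT (h ▸ hx), hTsubY hx⟩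
      have h1 : f' T ≤ f' (Y.erase j) := hf'mono _ _ hsub
      have h2 := key1 j hjY
      linarith
  · -- greedy fails
    intro l hg heq
    obtain ⟨hstep, _⟩ := hg
    have hlen : 0 < l.length := by
      rcases l with _ | ⟨a, l'⟩
      · exfalso
        simp only [List.toFinset_nil] at heq
        have : Y.card = 0 := by rw [← heq]; simp
        omega
      · simp
    set i0 : Fin l.length := ⟨0, hlen⟩ with hi0
    obtain ⟨_, _, hmax⟩ := hstep i0
    have htake : (l.take (i0 : ℕ)).toFinset = (∅ : Finset (Fin (k+1))) := by
      simp [hi0]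
    rw [htake] at hmax
    have hcard1 : (insert z (∅ : Finset (Fin (k+1)))).card ≤ k := by
      simp; omega
    have := hmax z (notMem_empty z) hcard1
    have hmem : l.get i0 ∈ l.toFinset := by
      rw [List.mem_toFinset]
      exact l.get_mem _
    rw [heq] at hmem
    have hne : l.get i0 ≠ z := fun h => hzY (h ▸ hmem)
    have hfe1 : f (insert (l.get i0) ∅) = 1 := by
      rw [Finset.insert_empty]; exact hfsingle _ hne
    have hfz1 : f (insert z ∅) = ε * k := by
      rw [Finset.insert_empty]; exact hfz
    have hfem : f ∅ = 0 := by
      simp [hfdef, hmdef, notMem_empty]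
    rw [hfe1, hfz1, hfem] at this
    linarith
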